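/- Let X₁, ..., Xₙ be independent Poisson random variables with parameters μ₁, ..., μₙ, and Y₁, ..., Yₙ independent Poisson with parameters μ₁*, ..., μₙ*, all positive. If (μ₁, ..., μₙ) majorizes (μ₁*, ..., μₙ*), then min(X₁,...,Xₙ) ≤_st min(Y₁,...,Yₙ), i.e., for every nonnegative integer r, P(min Xᵢ > r) ≤ P(min Yᵢ > r). -/

import Mathlib

open MeasureTheory ProbabilityTheory

open Finset Real
open scoped ENNReal

noncomputable def pH (r : ℕ) (x : ℝ) : ℝ := ∑ k ∈ Finset.range (r+1), x^k / (Nat.factorial k : ℝ)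
noncomputable def pS (r : ℕ) (x : ℝ) : ℝ := ∑' j : ℕ, x^(j + (r+1)) / (Nat.factorial (j + (r+1)) : ℝ)
noncomputable def pT (r : ℕ) (x : ℝ) : ℝ := 1 - Real.exp (-x) * pH r x

lemma summable_shift (x : ℝ) (m : ℕ) : Summable (fun j : ℕ => x^(j+m) / (Nat.factorial (j+m) : ℝ)) :=
  (summable_nat_add_iff m).2 (Real.summable_pow_div_factorial x)

lemma exp_eq_tsum (x : ℝ) : Real.exp x = ∑' n : ℕ, x^n / (Nat.factorial n : ℝ) := by
  rw [Real.exp_eq_exp_ℝ, NormedSpace.exp_eq_tsum_div]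

lemma pS_eq (r : ℕ) (x : ℝ) : pS r x = Real.exp x - pH r x := by
  have h := Summable.sum_add_tsum_nat_add (f := fun n : ℕ => x^n / (Nat.factorial n : ℝ)) (r+1) (Real.summable_pow_div_factorial x)
  rw [exp_eq_tsum]
  unfold pS pH
  linarith [h]

lemma pS_nonneg (r : ℕ) {x : ℝ} (hx : 0 ≤ x) : 0 ≤ pS r x :=
  tsum_nonneg fun j => by positivity

lemma pS_pos (r : ℕ) {x : ℝ} (hx : 0 < x) : 0 < pS r x := by
  have h := summable_shift x (r+1)
  refine Summable.tsum_pos h (fun j => by positivity) 0 (by positivity)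

lemma pT_eq (r : ℕ) (x : ℝ) : pT r x = Real.exp (-x) * pS r x := by
  rw [pS_eq, pT, mul_sub, ← Real.exp_add]
  simp

lemma pT_pos (r : ℕ) {x : ℝ} (hx : 0 < x) : 0 < pT r x := by
  rw [pT_eq]; exact mul_pos (Real.exp_pos _) (pS_pos r hx)

lemma pT_le_one (r : ℕ) {x : ℝ} (hx : 0 ≤ x) : pT r x ≤ 1 := by
  have : 0 ≤ Real.exp (-x) * pH r x := by
    refine mul_nonneg (Real.exp_nonneg _) ?_
    refine Finset.sum_nonneg fun k _ => by positivity
  unfold pT; linarith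

lemma key (r : ℕ) {x : ℝ} (hx : 0 ≤ x) :
    ((r : ℝ) - x) * pS r x ≤ x^(r+1) / (Nat.factorial r : ℝ) := by
  set c : ℕ → ℝ := fun j => if j = 0 then x^(r+1) / (Nat.factorial r : ℝ)
    else x * (x^((j-1) + (r+1)) / (Nat.factorial ((j-1) + (r+1)) : ℝ)) with hc
  have hsum1 : Summable (fun j : ℕ => ((r:ℝ)+1) * (x^(j+(r+1)) / (Nat.factorial (j+(r+1)) : ℝ))) :=
    (summable_shift x (r+1)).mul_left _
  have hcsucc : ∀ j : ℕ, c (j+1) = x * (x^(j+(r+1)) / (Nat.factorial (j+(r+1)) : ℝ)) := by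
    intro j; simp [hc]
  have hsum2 : Summable c := by
    have h2 : Summable (fun j : ℕ => c (j+1)) := by
      simpa [hcsucc] using ((summable_shift x (r+1)).mul_left x)
    exact (summable_nat_add_iff 1).1 h2
  have hterm : ∀ j : ℕ, ((r:ℝ)+1) * (x^(j+(r+1)) / (Nat.factorial (j+(r+1)) : ℝ)) ≤ c j := by
    intro j
    match j with
    | 0 =>
      simp only [hc, if_pos rfl, zero_add]
      rw [Nat.factorial_succ]
      apply le_of_eq
      have : (Nat.factorial r : ℝ) ≠ 0 := by positivity
      push_cast
      field_simp
    | (j+1) =>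
      rw [hcsucc j]
      have h1 : (Nat.factorial (j+1+(r+1)) : ℝ) = ((j:ℝ)+1+(r+1)) * (Nat.factorial (j+(r+1)) : ℝ) := by
        have : j+1+(r+1) = (j+(r+1)) + 1 := by omega
        rw [this, Nat.factorial_succ]; push_cast; ring
      have hx2 : x^(j+1+(r+1)) = x * x^(j+(r+1)) := by
        rw [show j+1+(r+1) = (j+(r+1))+1 from by omega, pow_succ]; ring
      rw [h1, hx2]
      have hF : (0:ℝ) < (Nat.factorial (j+(r+1)) : ℝ) := by positivity
      have hj : (0:ℝ) ≤ (j:ℝ) := Nat.cast_nonneg j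
      have h3 : ((r:ℝ)+1) / (((j:ℝ)+1+((r:ℝ)+1)) * (Nat.factorial (j+(r+1)) : ℝ)) ≤ 1 / (Nat.factorial (j+(r+1)) : ℝ) := by
        rw [div_le_div_iff₀ (by positivity) hF]
        nlinarith
      calc ((r:ℝ)+1) * (x * x^(j+(r+1)) / (((j:ℝ)+1+((r:ℝ)+1)) * (Nat.factorial (j+(r+1)) : ℝ)))
          = (x * x^(j+(r+1))) * (((r:ℝ)+1) / (((j:ℝ)+1+((r:ℝ)+1)) * (Nat.factorial (j+(r+1)) : ℝ))) := by ring
        _ ≤ (x * x^(j+(r+1))) * (1 / (Nat.factorial (j+(r+1)) : ℝ)) := by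
            exact mul_le_mul_of_nonneg_left h3 (by positivity)
        _ = x * (x^(j+(r+1)) / (Nat.factorial (j+(r+1)) : ℝ)) := by ring
  have hmain : ((r:ℝ)+1) * pS r x ≤ x^(r+1) / (Nat.factorial r : ℝ) + x * pS r x := by
    have h := Summable.tsum_le_tsum hterm hsum1 hsum2
    rw [tsum_mul_left] at h
    have hrhs : ∑' j, c j = x^(r+1) / (Nat.factorial r : ℝ) + x * pS r x := by
      rw [Summable.tsum_eq_zero_add hsum2]
      have h2 : ∑' j : ℕ, c (j+1) = x * pS r x := by
        rw [tsum_congr hcsucc, tsum_mul_left]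
        rfl
      rw [h2]
      simp [hc]
    rw [hrhs] at h
    exact h
  have hS := pS_nonneg r hx
  nlinarith

lemma hasDerivAt_pH (r : ℕ) (x : ℝ) :
    HasDerivAt (pH r) (∑ k ∈ Finset.range r, x^k / (Nat.factorial k : ℝ)) x := by
  have h : HasDerivAt (pH r) (∑ k ∈ Finset.range (r+1), (k:ℝ) * x^(k-1) / (Nat.factorial k : ℝ)) x := by
    unfold pH
    apply HasDerivAt.fun_sum
    intro k _
    exact (hasDerivAt_pow k x).div_const _
  convert h using 1
  rw [Finset.sum_range_succ']
  simp only [Nat.cast_zero, zero_mul, Nat.factorial_zero, Nat.cast_one, zero_div, add_zero]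
  apply Finset.sum_congr rfl
  intro k _
  rw [Nat.factorial_succ]
  have hk : (Nat.factorial k : ℝ) ≠ 0 := by positivity
  push_cast
  field_simp

lemma hasDerivAt_pT (r : ℕ) (x : ℝ) :
    HasDerivAt (pT r) (Real.exp (-x) * x^r / (Nat.factorial r : ℝ)) x := by
  have hexp : HasDerivAt (fun y : ℝ => Real.exp (-y)) (-Real.exp (-x)) x := by
    simpa [Function.comp_def] using (Real.hasDerivAt_exp (-x)).comp x (hasDerivAt_neg x)
  have h := ((hexp.mul (hasDerivAt_pH r x)).const_sub 1)
  refine h.congr_deriv ?_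
  unfold pH
  rw [Finset.sum_range_succ]
  ring

lemma hasDerivAt_pT' (r : ℕ) (x : ℝ) :
    HasDerivAt (fun y : ℝ => Real.exp (-y) * y^r / (Nat.factorial r : ℝ))
      (Real.exp (-x) * ((r:ℝ) * x^(r-1) - x^r) / (Nat.factorial r : ℝ)) x := by
  have hexp : HasDerivAt (fun y : ℝ => Real.exp (-y)) (-Real.exp (-x)) x := by
    simpa [Function.comp_def] using (Real.hasDerivAt_exp (-x)).comp x (hasDerivAt_neg x)
  have h := (hexp.mul (hasDerivAt_pow r x)).div_const (Nat.factorial r : ℝ)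
  refine h.congr_deriv ?_
  ring

noncomputable def pG (r : ℕ) (x : ℝ) : ℝ :=
  (Real.exp (-x) * x^r / (Nat.factorial r : ℝ)) / pT r x

lemma hasDerivAt_pG (r : ℕ) {x : ℝ} (hx : 0 < x) :
    HasDerivAt (pG r)
      ((Real.exp (-x) * ((r:ℝ) * x^(r-1) - x^r) / (Nat.factorial r : ℝ) * pT r x -
        Real.exp (-x) * x^r / (Nat.factorial r : ℝ) * (Real.exp (-x) * x^r / (Nat.factorial r : ℝ))) /
        (pT r x)^2) x := by
  exact (hasDerivAt_pT' r x).div (hasDerivAt_pT r x) (pT_pos r hx).ne'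

lemma numer_nonpos (r : ℕ) {x : ℝ} (hx : 0 < x) :
    Real.exp (-x) * ((r:ℝ) * x^(r-1) - x^r) / (Nat.factorial r : ℝ) * pT r x -
      Real.exp (-x) * x^r / (Nat.factorial r : ℝ) * (Real.exp (-x) * x^r / (Nat.factorial r : ℝ)) ≤ 0 := by
  have hT : 0 < pT r x := pT_pos r hx
  have hTe : pT r x = Real.exp (-x) * pS r x := pT_eq r x
  match r with
  | 0 =>
    simp only [Nat.cast_zero, zero_mul, pow_zero, zero_sub, Nat.factorial_zero, Nat.cast_one, div_one]
    nlinarith [Real.exp_pos (-x), pT_pos 0 hx]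
  | (s+1) =>
    have hkey := key (s+1) (le_of_lt hx)
    rw [hTe]
    have hfac : (0:ℝ) < (Nat.factorial (s+1) : ℝ) := by positivity
    have hxs : (0:ℝ) ≤ x^s := by positivity
    -- multiply key by exp(-x)^2 * x^s / (s+1)!^2 ≥ 0
    have h2 := mul_le_mul_of_nonneg_left hkey
      (show (0:ℝ) ≤ Real.exp (-x) * Real.exp (-x) * x^s / (Nat.factorial (s+1) : ℝ) by positivity)
    have e1 : ((s+1:ℕ):ℝ) * x^((s+1)-1) - x^(s+1) = x^s * (((s+1:ℕ):ℝ) - x) := by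
      rw [show (s+1)-1 = s from rfl]
      push_cast
      rw [pow_succ]
      ring
    rw [e1]
    ring_nf at h2 ⊢
    nlinarith [h2, Real.exp_pos (-x), pS_nonneg (s+1) (le_of_lt hx)]

lemma pG_anti (r : ℕ) : AntitoneOn (pG r) (Set.Ioi 0) := by
  apply antitoneOn_of_deriv_nonpos (convex_Ioi 0)
  · intro x hx
    exact (hasDerivAt_pG r hx).continuousAt.continuousWithinAt
  · rw [interior_Ioi]
    intro x hx
    exact (hasDerivAt_pG r hx).differentiableAt.differentiableWithinAt
  · rw [interior_Ioi]
    intro x hx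
    rw [(hasDerivAt_pG r hx).deriv]
    exact div_nonpos_of_nonpos_of_nonneg (numer_nonpos r hx) (sq_nonneg _)

lemma tangent_le {φ φ' : ℝ → ℝ} (hd : ∀ x ∈ Set.Ioi (0:ℝ), HasDerivAt φ (φ' x) x)
    (hm : MonotoneOn φ' (Set.Ioi 0)) {a b : ℝ} (ha : 0 < a) (hb : 0 < b) :
    φ' b * (a - b) ≤ φ a - φ b := by
  rcases lt_trichotomy a b with h | h | h
  · obtain ⟨c, hc, hceq⟩ := exists_hasDerivAt_eq_slope φ φ' h
      (fun x hx => (hd x (lt_of_lt_of_le ha hx.1)).continuousAt.continuousWithinAt)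
      (fun x hx => hd x (lt_trans ha hx.1))
    have hcpos : (0:ℝ) < c := lt_trans ha hc.1
    have hcb : φ' c ≤ φ' b := hm hcpos hb (le_of_lt hc.2)
    have hba : (0:ℝ) < b - a := by linarith
    have heq : φ b - φ a = φ' c * (b - a) := by
      field_simp at hceq
      linarith [hceq]
    nlinarith
  · subst h; simp
  · obtain ⟨c, hc, hceq⟩ := exists_hasDerivAt_eq_slope φ φ' h
      (fun x hx => (hd x (lt_of_lt_of_le hb hx.1)).continuousAt.continuousWithinAt)
      (fun x hx => hd x (lt_trans hb hx.1))
    have hcpos : (0:ℝ) < c := lt_trans hb hc.1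
    have hbc : φ' b ≤ φ' c := hm hb hcpos (le_of_lt hc.1)
    have hab : (0:ℝ) < a - b := by linarith
    have heq : φ a - φ b = φ' c * (a - b) := by
      field_simp at hceq
      linarith [hceq]
    nlinarith

lemma strictMono_le_apply {k n : ℕ} {f : Fin k → Fin n} (hf : StrictMono f) :
    ∀ j : Fin k, (j:ℕ) ≤ (f j : ℕ) := by
  have H : ∀ m, ∀ hm : m < k, m ≤ (f ⟨m, hm⟩ : ℕ) := by
    intro m
    induction m with
    | zero => intro hm; exact Nat.zero_le _
    | succ m ih =>
      intro hm
      have hm' : m < k := by omega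
      have h1 := ih hm'
      have h2 : f ⟨m, hm'⟩ < f ⟨m+1, hm⟩ := hf (by simp [Fin.lt_def])
      have h3 := Fin.lt_def.1 h2
      omega
  intro j
  have := H j.1 j.2
  simpa using this

lemma prefix_dom {n : ℕ} {u : Fin n → ℝ} (hu : Antitone u) (t : Finset (Fin n)) :
    ∑ i ∈ t, u i ≤ ∑ j ∈ Finset.range t.card, (if h : j < n then u ⟨j, h⟩ else 0) := by
  have hkn : t.card ≤ n := by
    simpa using Finset.card_le_card (Finset.subset_univ t)
  set k := t.card with hk
  have e := t.orderIsoOfFin (k := k) rfl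
  have hf : StrictMono (fun j : Fin k => ((t.orderIsoOfFin rfl j : {x // x ∈ t}) : Fin n)) := by
    intro a b hab
    exact (t.orderIsoOfFin rfl).strictMono hab
  have h1 : ∑ i ∈ t, u i = ∑ j : Fin k, u ((t.orderIsoOfFin rfl j : {x // x ∈ t}) : Fin n) := by
    rw [← Finset.sum_attach t u]
    exact (Fintype.sum_equiv (t.orderIsoOfFin rfl).toEquiv _ _ (fun j => rfl)).symm
  have h2 : ∑ j ∈ Finset.range k, (if h : j < n then u ⟨j, h⟩ else 0)
      = ∑ j : Fin k, u ⟨j.1, lt_of_lt_of_le j.2 hkn⟩ := by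
    rw [← Fin.sum_univ_eq_sum_range (fun j => if h : j < n then u ⟨j, h⟩ else 0) k]
    apply Finset.sum_congr rfl
    intro j _
    rw [dif_pos (lt_of_lt_of_le j.2 hkn)]
  rw [h1, h2]
  apply Finset.sum_le_sum
  intro j _
  apply hu
  rw [Fin.le_def]
  exact strictMono_le_apply hf j

lemma abel_nonneg (c d : ℕ → ℝ) (n : ℕ)
    (hc : ∀ j, j+1 < n → c (j+1) ≤ c j)
    (hd : ∀ k, k ≤ n → 0 ≤ ∑ j ∈ Finset.range k, d j)
    (h0 : ∑ j ∈ Finset.range n, d j = 0) :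
    0 ≤ ∑ j ∈ Finset.range n, c j * d j := by
  rcases Nat.eq_zero_or_pos n with hn | hn
  · simp [hn]
  have hparts := Finset.sum_range_by_parts c d n
  simp only [smul_eq_mul] at hparts
  rw [hparts, h0, mul_zero]
  have hterm : ∀ i ∈ Finset.range (n-1), (c (i+1) - c i) * (∑ j ∈ Finset.range (i+1), d j) ≤ 0 := by
    intro i hi
    have hi' := Finset.mem_range.1 hi
    apply mul_nonpos_of_nonpos_of_nonneg
    · have := hc i (by omega)
      linarith
    · exact hd (i+1) (by omega)
  have := Finset.sum_nonpos hterm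
  linarith

/-- `x` majorizes `y`. -/
def Majorizes {n : ℕ} (x y : Fin n → ℝ) : Prop :=
  (∀ s : Finset (Fin n), ∃ t : Finset (Fin n),
      t.card = s.card ∧ ∑ i ∈ s, y i ≤ ∑ i ∈ t, x i) ∧
  ∑ i, x i = ∑ i, y i

lemma karamata {n : ℕ} (x y : Fin n → ℝ) (hx : ∀ i, 0 < x i) (hy : ∀ i, 0 < y i)
    (hmaj : Majorizes x y) {φ φ' : ℝ → ℝ}
    (htan : ∀ a b : ℝ, 0 < a → 0 < b → φ' b * (a - b) ≤ φ a - φ b)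
    (hm : MonotoneOn φ' (Set.Ioi 0)) :
    ∑ i, φ (y i) ≤ ∑ i, φ (x i) := by
  classical
  set σ := Tuple.sort (fun i => -x i) with hσ
  set τ := Tuple.sort (fun i => -y i) with hτ
  set a : Fin n → ℝ := fun j => x (σ j) with haa
  set b : Fin n → ℝ := fun j => y (τ j) with hbb
  have ha : Antitone a := by
    intro i j hij
    have := Tuple.monotone_sort (fun i => -x i) hij
    simp only [Function.comp_apply] at this
    simp only [haa]
    linarith
  have hb : Antitone b := by
    intro i j hij
    have := Tuple.monotone_sort (fun i => -y i) hij
    simp only [Function.comp_apply] at this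
    simp only [hbb]
    linarith
  set a' : ℕ → ℝ := fun j => if h : j < n then a ⟨j, h⟩ else 0 with ha'
  set b' : ℕ → ℝ := fun j => if h : j < n then b ⟨j, h⟩ else 0 with hb'
  -- sums over range n agree with full sums
  have hsuma : ∑ j ∈ Finset.range n, a' j = ∑ i, x i := by
    rw [← Fin.sum_univ_eq_sum_range a' n]
    have h1 : ∀ j : Fin n, a' j.1 = a j := by
      intro j; simp [ha', j.2]
    rw [Finset.sum_congr rfl (fun j _ => h1 j)]
    exact Equiv.sum_comp σ x
  have hsumb : ∑ j ∈ Finset.range n, b' j = ∑ i, y i := by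
    rw [← Fin.sum_univ_eq_sum_range b' n]
    have h1 : ∀ j : Fin n, b' j.1 = b j := by
      intro j; simp [hb', j.2]
    rw [Finset.sum_congr rfl (fun j _ => h1 j)]
    exact Equiv.sum_comp τ y
  -- prefix sums domination
  have hpre : ∀ k, k ≤ n → ∑ j ∈ Finset.range k, b' j ≤ ∑ j ∈ Finset.range k, a' j := by
    intro k hkn
    set s : Finset (Fin n) := Finset.univ.map ((Fin.castLEEmb hkn).trans τ.toEmbedding) with hs
    have hscard : s.card = k := by simp [hs]
    have hsms : ∑ i ∈ s, y i = ∑ j ∈ Finset.range k, b' j := by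
      rw [hs, Finset.sum_map]
      rw [← Fin.sum_univ_eq_sum_range b' k]
      apply Finset.sum_congr rfl
      intro j _
      have hjn : (j : ℕ) < n := lt_of_lt_of_le j.2 hkn
      simp only [hb', Function.Embedding.trans_apply, Equiv.coe_toEmbedding, Fin.castLEEmb_apply]
      rw [dif_pos hjn]
      rfl
    obtain ⟨t, hcard, hle⟩ := hmaj.1 s
    set t' : Finset (Fin n) := t.map σ.symm.toEmbedding with ht'
    have ht'card : t'.card = k := by rw [ht', Finset.card_map, hcard, hscard]
    have hsumt : ∑ j ∈ t', a j = ∑ i ∈ t, x i := by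
      rw [ht', Finset.sum_map]
      apply Finset.sum_congr rfl
      intro i _
      simp [haa]
    have := prefix_dom ha t'
    rw [ht'card] at this
    rw [← hsms] at *
    calc ∑ i ∈ s, y i ≤ ∑ i ∈ t, x i := hle
      _ = ∑ j ∈ t', a j := hsumt.symm
      _ ≤ ∑ j ∈ Finset.range k, a' j := this
  -- positivity of entries
  have ha'pos : ∀ j, j < n → 0 < a' j := by
    intro j hj; simp only [ha', dif_pos hj]; exact hx _
  have hb'pos : ∀ j, j < n → 0 < b' j := by
    intro j hj; simp only [hb', dif_pos hj]; exact hy _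
  -- Abel
  have habel := abel_nonneg (fun j => φ' (b' j)) (fun j => a' j - b' j) n
    (by
      intro j hj
      apply hm (Set.mem_Ioi.2 (hb'pos _ (by omega))) (Set.mem_Ioi.2 (hb'pos _ (by omega)))
      have h1 : b' (j+1) ≤ b' j := by
        simp only [hb', dif_pos (show j+1 < n from hj), dif_pos (show j < n by omega)]
        exact hb (by simp [Fin.le_def])
      exact h1)
    (by
      intro k hk
      rw [Finset.sum_sub_distrib]
      have := hpre k hk
      linarith)
    (by
      rw [Finset.sum_sub_distrib, hsuma, hsumb, hmaj.2]
      ring)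
  have hterm : ∀ j ∈ Finset.range n, φ' (b' j) * (a' j - b' j) ≤ φ (a' j) - φ (b' j) := by
    intro j hj
    have hj' := Finset.mem_range.1 hj
    exact htan _ _ (ha'pos j hj') (hb'pos j hj')
  have hsum := Finset.sum_le_sum hterm
  have hxa : ∑ j ∈ Finset.range n, φ (a' j) = ∑ i, φ (x i) := by
    rw [← Fin.sum_univ_eq_sum_range (fun j => φ (a' j)) n]
    have h1 : ∀ j : Fin n, φ (a' j.1) = φ (a j) := by
      intro j; simp [ha', j.2]
    rw [Finset.sum_congr rfl (fun j _ => h1 j)]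
    exact Equiv.sum_comp σ (fun i => φ (x i))
  have hyb : ∑ j ∈ Finset.range n, φ (b' j) = ∑ i, φ (y i) := by
    rw [← Fin.sum_univ_eq_sum_range (fun j => φ (b' j)) n]
    have h1 : ∀ j : Fin n, φ (b' j.1) = φ (b j) := by
      intro j; simp [hb', j.2]
    rw [Finset.sum_congr rfl (fun j _ => h1 j)]
    exact Equiv.sum_comp τ (fun i => φ (y i))
  have hfinal : 0 ≤ ∑ j ∈ Finset.range n, (φ (a' j) - φ (b' j)) := le_trans habel hsum
  rw [Finset.sum_sub_distrib, hxa, hyb] at hfinal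
  linarith

lemma hasDerivAt_neglog (r : ℕ) {x : ℝ} (hx : 0 < x) :
    HasDerivAt (fun y => -Real.log (pT r y)) (-(pG r x)) x := by
  have h := ((hasDerivAt_pT r x).log (pT_pos r hx).ne').neg
  exact h

lemma prod_pT_le {n : ℕ} (r : ℕ) (μ μ' : Fin n → ℝ) (hμ : ∀ i, 0 < μ i) (hμ' : ∀ i, 0 < μ' i)
    (hmaj : Majorizes μ μ') : ∏ i, pT r (μ i) ≤ ∏ i, pT r (μ' i) := by
  have htan : ∀ a b : ℝ, 0 < a → 0 < b →
      (fun t => -(pG r t)) b * (a - b) ≤ (fun t => -Real.log (pT r t)) a - (fun t => -Real.log (pT r t)) b := by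
    intro a b ha hb
    exact tangent_le (fun x hx => hasDerivAt_neglog r hx)
      (fun u hu v hv huv => neg_le_neg (pG_anti r hu hv huv)) ha hb
  have hk := karamata μ μ' hμ hμ' hmaj htan
    (fun u hu v hv huv => neg_le_neg (pG_anti r hu hv huv))
  simp only [Finset.sum_neg_distrib] at hk
  have hsum : ∑ i, Real.log (pT r (μ i)) ≤ ∑ i, Real.log (pT r (μ' i)) := by linarith [hk]
  have hp1 : (0:ℝ) < ∏ i, pT r (μ i) := Finset.prod_pos (fun i _ => pT_pos r (hμ i))
  have hp2 : (0:ℝ) < ∏ i, pT r (μ' i) := Finset.prod_pos (fun i _ => pT_pos r (hμ' i))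
  rw [← Real.log_le_log_iff hp1 hp2]
  rw [Real.log_prod (fun i _ => (pT_pos r (hμ i)).ne'),
    Real.log_prod (fun i _ => (pT_pos r (hμ' i)).ne')]
  exact hsum

open MeasureTheory ProbabilityTheory
open scoped ENNReal

lemma pH_nonneg (r : ℕ) {x : ℝ} (hx : 0 ≤ x) : 0 ≤ pH r x :=
  Finset.sum_nonneg fun k _ => by positivity

theorem poisson_min_stochastic_order {Ω : Type*} [MeasurableSpace Ω]
    (P : Measure Ω) [IsProbabilityMeasure P] (n : ℕ)
    (X Y : Fin n → Ω → ℕ) (μ μ' : Fin n → ℝ)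
    (hμ : ∀ i, 0 < μ i) (hμ' : ∀ i, 0 < μ' i)
    (hXind : iIndepFun X P)
    (hYind : iIndepFun Y P)
    (hX : ∀ i k, P {ω | X i ω = k} =
      ENNReal.ofReal (Real.exp (-μ i) * μ i ^ k / (k.factorial : ℝ)))
    (hY : ∀ i k, P {ω | Y i ω = k} =
      ENNReal.ofReal (Real.exp (-μ' i) * μ' i ^ k / (k.factorial : ℝ)))
    (hmaj : Majorizes μ μ') (r : ℕ) :
    P {ω | ∀ i, r < X i ω} ≤ P {ω | ∀ i, r < Y i ω} := by
  classical
  have hXset : {ω | ∀ i, r < X i ω} = ⋂ i ∈ Finset.univ, X i ⁻¹' {k : ℕ | r < k} := by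
    ext ω; simp [Set.mem_iInter]
  have hYset : {ω | ∀ i, r < Y i ω} = ⋂ i ∈ Finset.univ, Y i ⁻¹' {k : ℕ | r < k} := by
    ext ω; simp [Set.mem_iInter]
  have hXprod := hXind.measure_inter_preimage_eq_mul Finset.univ
      (sets := fun _ => {k : ℕ | r < k}) (fun i _ => MeasurableSpace.measurableSet_top)
  have hYprod := hYind.measure_inter_preimage_eq_mul Finset.univ
      (sets := fun _ => {k : ℕ | r < k}) (fun i _ => MeasurableSpace.measurableSet_top)
  -- upper bound for X side
  have hXle : ∀ i, P (X i ⁻¹' {k : ℕ | r < k}) ≤ ENNReal.ofReal (pT r (μ i)) := by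
    intro i
    have hset : X i ⁻¹' {k : ℕ | r < k} = ⋃ j : ℕ, {ω | X i ω = j + (r+1)} := by
      ext ω
      simp only [Set.mem_preimage, Set.mem_setOf_eq, Set.mem_iUnion]
      constructor
      · intro h; exact ⟨X i ω - (r+1), by omega⟩
      · rintro ⟨j, hj⟩; omega
    rw [hset]
    refine le_trans (measure_iUnion_le _) (le_of_eq ?_)
    have hsummable : Summable (fun j : ℕ =>
        Real.exp (-μ i) * (μ i ^ (j+(r+1)) / ((j+(r+1)).factorial : ℝ))) :=
      (summable_shift (μ i) (r+1)).mul_left _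
    calc ∑' j : ℕ, P {ω | X i ω = j + (r+1)}
        = ∑' j : ℕ, ENNReal.ofReal
            (Real.exp (-μ i) * (μ i ^ (j+(r+1)) / ((j+(r+1)).factorial : ℝ))) := by
          refine tsum_congr fun j => ?_
          rw [hX i (j+(r+1)), mul_div_assoc]
      _ = ENNReal.ofReal (∑' j : ℕ,
            Real.exp (-μ i) * (μ i ^ (j+(r+1)) / ((j+(r+1)).factorial : ℝ))) := by
          rw [← ENNReal.ofReal_tsum_of_nonneg (fun j => mul_nonneg (Real.exp_nonneg _) (div_nonneg (pow_nonneg (hμ i).le _) (by positivity))) hsummable]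
      _ = ENNReal.ofReal (pT r (μ i)) := by
          rw [pT_eq, pS]
          congr 1
          rw [tsum_mul_left]
  -- lower bound for Y side
  have hYge : ∀ i, ENNReal.ofReal (pT r (μ' i)) ≤ P (Y i ⁻¹' {k : ℕ | r < k}) := by
    intro i
    have hcover : (Set.univ : Set Ω) ⊆
        (Y i ⁻¹' {k : ℕ | r < k}) ∪ ⋃ k ∈ Finset.range (r+1), {ω | Y i ω = k} := by
      intro ω _
      by_cases h : r < Y i ω
      · exact Or.inl h
      · refine Or.inr ?_
        simp only [Set.mem_iUnion, Set.mem_setOf_eq, Finset.mem_range]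
        exact ⟨Y i ω, by omega, rfl⟩
    have h2 : ∑ k ∈ Finset.range (r+1), P {ω | Y i ω = k}
        = ENNReal.ofReal (Real.exp (-μ' i) * pH r (μ' i)) := by
      have e1 : ∀ k ∈ Finset.range (r+1), P {ω | Y i ω = k}
          = ENNReal.ofReal (Real.exp (-μ' i) * (μ' i ^ k / (k.factorial : ℝ))) := by
        intro k _
        rw [hY i k, mul_div_assoc]
      rw [Finset.sum_congr rfl e1,
        ← ENNReal.ofReal_sum_of_nonneg (fun k _ => mul_nonneg (Real.exp_nonneg _)
          (div_nonneg (pow_nonneg (hμ' i).le _) (by positivity)))]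
      congr 1
      rw [pH, Finset.mul_sum]
    have h1 : (1:ℝ≥0∞) ≤ P (Y i ⁻¹' {k : ℕ | r < k})
        + ENNReal.ofReal (Real.exp (-μ' i) * pH r (μ' i)) := by
      calc (1:ℝ≥0∞) = P Set.univ := (measure_univ).symm
        _ ≤ P ((Y i ⁻¹' {k : ℕ | r < k}) ∪ ⋃ k ∈ Finset.range (r+1), {ω | Y i ω = k}) :=
            measure_mono hcover
        _ ≤ P (Y i ⁻¹' {k : ℕ | r < k}) + P (⋃ k ∈ Finset.range (r+1), {ω | Y i ω = k}) :=
            measure_union_le _ _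
        _ ≤ P (Y i ⁻¹' {k : ℕ | r < k}) + ∑ k ∈ Finset.range (r+1), P {ω | Y i ω = k} := by
            gcongr
            exact measure_biUnion_finset_le _ _
        _ = _ := by rw [h2]
    have h3 : ENNReal.ofReal (pT r (μ' i))
        = 1 - ENNReal.ofReal (Real.exp (-μ' i) * pH r (μ' i)) := by
      rw [pT, ENNReal.ofReal_sub _ (mul_nonneg (Real.exp_nonneg _) (pH_nonneg r (hμ' i).le)), ENNReal.ofReal_one]
    rw [h3]
    exact tsub_le_iff_right.2 h1
  calc P {ω | ∀ i, r < X i ω} = ∏ i, P (X i ⁻¹' {k : ℕ | r < k}) := by rw [hXset, hXprod]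
    _ ≤ ∏ i, ENNReal.ofReal (pT r (μ i)) := Finset.prod_le_prod' (fun i _ => hXle i)
    _ = ENNReal.ofReal (∏ i, pT r (μ i)) :=
        (ENNReal.ofReal_prod_of_nonneg (fun i _ => (pT_pos r (hμ i)).le)).symm
    _ ≤ ENNReal.ofReal (∏ i, pT r (μ' i)) :=
        ENNReal.ofReal_le_ofReal (prod_pT_le r μ μ' hμ hμ' hmaj)
    _ = ∏ i, ENNReal.ofReal (pT r (μ' i)) :=
        ENNReal.ofReal_prod_of_nonneg (fun i _ => (pT_pos r (hμ' i)).le)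
    _ ≤ ∏ i, P (Y i ⁻¹' {k : ℕ | r < k}) := Finset.prod_le_prod' (fun i _ => hYge i)
    _ = P {ω | ∀ i, r < Y i ω} := by rw [hYset, hYprod]
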